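/- Under the cellular automaton T on the triangular lattice, clusters cannot split: if x and y belong to the same constant-sign cluster C at time n, and neither σ_x nor σ_y changes at time n+1, then x and y belong to the same cluster at time n+1. -/

import Mathlib

open Classical

/-- Adjacency in the triangular lattice `𝕋`, realized on `ℤ × ℤ`. -/
def triAdj (x y : ℤ × ℤ) : Prop :=
  (y.1 - x.1, y.2 - x.2) ∈
    ({(1,0), (-1,0), (0,1), (0,-1), (1,-1), (-1,1)} : Set (ℤ × ℤ))

/-- One step of the cellular automaton `T`: the spin at `x` keeps its value iff `x` has two
non-adjacent neighbors `y₁ ≠ y₂` with the same spin as `x`; otherwise it flips. -/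
noncomputable def Tstep (σ : ℤ × ℤ → ℤ) (x : ℤ × ℤ) : ℤ :=
  if ∃ y₁ y₂ : ℤ × ℤ, y₁ ≠ y₂ ∧ triAdj x y₁ ∧ triAdj x y₂ ∧ ¬ triAdj y₁ y₂ ∧
      σ y₁ = σ x ∧ σ y₂ = σ x
  then σ x else -σ x

/-- The trajectory of the automaton `T` started from `σ₀`. -/
noncomputable def traj (σ₀ : ℤ × ℤ → ℤ) : ℕ → ℤ × ℤ → ℤ
  | 0 => σ₀
  | n + 1 => Tstep (traj σ₀ n)

/-- The six neighbors of a site of the triangular lattice. -/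
def triNbrs (x : ℤ × ℤ) : Finset (ℤ × ℤ) :=
  {(x.1 + 1, x.2), (x.1 - 1, x.2), (x.1, x.2 + 1), (x.1, x.2 - 1),
    (x.1 + 1, x.2 - 1), (x.1 - 1, x.2 + 1)}

/-- `x` and `y` lie in the same constant-sign cluster of `σ`. -/
def sameCluster (σ : ℤ × ℤ → ℤ) (x y : ℤ × ℤ) : Prop :=
  Relation.ReflTransGen (fun a b => triAdj a b ∧ σ a = σ b) x y

/-- Connectivity within a set of sites `S`. -/
def connIn (S : Set (ℤ × ℤ)) (a b : ℤ × ℤ) : Prop :=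
  Relation.ReflTransGen (fun u v => triAdj u v ∧ u ∈ S ∧ v ∈ S) a b

lemma triAdj_symm {x y : ℤ × ℤ} (h : triAdj x y) : triAdj y x := by
  simp only [triAdj, Set.mem_insert_iff, Set.mem_singleton_iff, Prod.mk.injEq] at h ⊢
  omega

lemma triAdj_irrefl (x : ℤ × ℤ) : ¬ triAdj x x := by
  simp [triAdj, Prod.ext_iff]

/-- Stability of a site having two non-adjacent distinct same-spin neighbors. -/
lemma stable_of_two_nbrs (σ : ℤ × ℤ → ℤ) {b a c : ℤ × ℤ} (hne : a ≠ c)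
    (hab : triAdj b a) (hbc : triAdj b c) (hac : ¬ triAdj a c)
    (ha : σ a = σ b) (hc : σ c = σ b) : Tstep σ b = σ b := by
  unfold Tstep
  exact if_pos ⟨a, c, hne, hab, hbc, hac, ha, hc⟩

/-- Main lemma: a constant-sign chain with stable endpoints stays connected. -/
lemma chain_survives (σ : ℤ × ℤ → ℤ) (l : List (ℤ × ℤ)) (x y : ℤ × ℤ)
    (hc : List.Chain (fun a b => triAdj a b ∧ σ a = σ b) x l)
    (hlast : (x :: l).getLast (List.cons_ne_nil _ _) = y)
    (hx : Tstep σ x = σ x) (hy : Tstep σ y = σ y) :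
    sameCluster (Tstep σ) x y := by
  match l, hc, hlast with
  | [], _, hlast =>
    simp only [List.getLast_singleton] at hlast
    exact hlast ▸ Relation.ReflTransGen.refl
  | [b], hc, hlast =>
    rw [List.Chain, List.chain_cons] at hc
    have hyb : y = b := by simpa using hlast.symm
    subst hyb
    exact Relation.ReflTransGen.single ⟨hc.1.1, by rw [hx, hy]; exact hc.1.2⟩
  | b :: c :: t, hc, hlast =>
    rw [List.Chain, List.chain_cons] at hc
    obtain ⟨⟨hxb, hsxb⟩, hc⟩ := hc
    rw [List.chain_cons] at hc
    obtain ⟨⟨hbc, hsbc⟩, hct⟩ := hc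
    have hlast' : (c :: t).getLast (List.cons_ne_nil _ _) = y := by
      rw [List.getLast_cons (List.cons_ne_nil _ _), List.getLast_cons (List.cons_ne_nil _ _)]
        at hlast
      exact hlast
    by_cases h1 : x = c
    · -- skip b and c : recurse on x :: t
      subst h1
      exact chain_survives σ t x y hct hlast' hx hy
    · by_cases h2 : triAdj x c
      · -- shortcut x -> c : recurse on x :: c :: t
        have hchain : List.Chain (fun a b => triAdj a b ∧ σ a = σ b) x (c :: t) :=
          List.chain_cons.mpr ⟨⟨h2, by rw [hsxb, hsbc]⟩, hct⟩
        have hlast'' : (x :: c :: t).getLast (List.cons_ne_nil _ _) = y := by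
          rw [List.getLast_cons (List.cons_ne_nil _ _)]
          exact hlast'
        exact chain_survives σ (c :: t) x y hchain hlast'' hx hy
      · -- b is stable: its neighbors x and c are distinct and non-adjacent
        have hb : Tstep σ b = σ b :=
          stable_of_two_nbrs σ h1 (triAdj_symm hxb) hbc h2 hsxb hsbc.symm
        have hchain : List.Chain (fun a b => triAdj a b ∧ σ a = σ b) b (c :: t) :=
          List.chain_cons.mpr ⟨⟨hbc, hsbc⟩, hct⟩
        have hlast'' : (b :: c :: t).getLast (List.cons_ne_nil _ _) = y := by
          rw [List.getLast_cons (List.cons_ne_nil _ _)]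
          exact hlast'
        have hrest : sameCluster (Tstep σ) b y :=
          chain_survives σ (c :: t) b y hchain hlast'' hb hy
        exact Relation.ReflTransGen.head ⟨hxb, by rw [hx, hb]; exact hsxb⟩ hrest
termination_by l.length
decreasing_by all_goals · simp; try omega

/-- Clusters cannot split under `T`: if `x` and `y` are in the same cluster and neither
spin changes in one step, then they are in the same cluster after the update. -/
theorem clusters_cannot_split (σ : ℤ × ℤ → ℤ) (hpm : ∀ z, σ z = 1 ∨ σ z = -1)
    (x y : ℤ × ℤ) (hxy : sameCluster σ x y)
    (hx : Tstep σ x = σ x) (hy : Tstep σ y = σ y) :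
    sameCluster (Tstep σ) x y := by
  obtain ⟨l, hc, hlast⟩ := List.exists_isChain_cons_of_relationReflTransGen hxy
  exact chain_survives σ l x y hc hlast hx hy
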